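/- Let X and Y be locally compact Hausdorff spaces and let T : C_c(X,ℝ) → C_c(Y,ℝ) be an additive lattice isomorphism, i.e., a bijection which is additive (T(f+g) = Tf + Tg) and satisfies f ≤ g if and only if Tf ≤ Tg. Then there exist a unique homeomorphism φ : Y → X and a unique continuous function p : Y → (0,∞) such that Tf(y) = p(y)·f(φ(y)) for all f ∈ C_c(X,ℝ) and all y ∈ Y. -/

import Mathlib

open Set Topology



section helpers
variable {X : Type*} [TopologicalSpace X] [T2Space X]

lemma hcs_of_subset {f g : C(X,ℝ)} (hf : HasCompactSupport ⇑f)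
    (h : ∀ x, g x ≠ 0 → f x ≠ 0) : HasCompactSupport ⇑g := by
  apply HasCompactSupport.of_support_subset_isCompact hf.isCompact
  exact fun x hx => subset_tsupport _ (h x hx)

lemma hcs_of_subset2 {f g h : C(X,ℝ)} (hf : HasCompactSupport ⇑f) (hg : HasCompactSupport ⇑g)
    (hs : ∀ x, h x ≠ 0 → f x ≠ 0 ∨ g x ≠ 0) : HasCompactSupport ⇑h := by
  apply HasCompactSupport.of_support_subset_isCompact (hf.isCompact.union hg.isCompact)
  intro x hx
  rcases hs x hx with h1 | h1
  · exact mem_union_left _ (subset_tsupport _ h1)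
  · exact mem_union_right _ (subset_tsupport _ h1)

lemma hcs_sup {f g : C(X,ℝ)} (hf : HasCompactSupport ⇑f) (hg : HasCompactSupport ⇑g) :
    HasCompactSupport ⇑(f ⊔ g) := by
  apply hcs_of_subset2 hf hg
  intro x hx
  simp only [ContinuousMap.sup_apply] at hx
  by_contra hc
  push_neg at hc
  simp [hc.1, hc.2] at hx

lemma hcs_inf {f g : C(X,ℝ)} (hf : HasCompactSupport ⇑f) (hg : HasCompactSupport ⇑g) :
    HasCompactSupport ⇑(f ⊓ g) := by
  apply hcs_of_subset2 hf hg
  intro x hx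
  simp only [ContinuousMap.inf_apply] at hx
  by_contra hc
  push_neg at hc
  simp [hc.1, hc.2] at hx

omit [T2Space X] in
lemma hcs_add {f g : C(X,ℝ)} (hf : HasCompactSupport ⇑f) (hg : HasCompactSupport ⇑g) :
    HasCompactSupport ⇑(f + g) := by
  rw [ContinuousMap.coe_add]; exact hf.add hg

lemma hcs_neg {f : C(X,ℝ)} (hf : HasCompactSupport ⇑f) : HasCompactSupport ⇑(-f) := by
  apply hcs_of_subset hf
  intro x hx
  simpa using hx

lemma hcs_smul (c : ℝ) {f : C(X,ℝ)} (hf : HasCompactSupport ⇑f) :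
    HasCompactSupport ⇑(c • f) := by
  apply hcs_of_subset hf
  intro x hx
  simp only [ContinuousMap.smul_apply, smul_eq_mul, ne_eq, mul_eq_zero, not_or] at hx
  exact hx.2

omit [T2Space X] in
lemma hcs_zero : HasCompactSupport ⇑(0 : C(X,ℝ)) := by
  rw [ContinuousMap.coe_zero]; exact HasCompactSupport.zero

omit [T2Space X] in
lemma sup_add_inf' (f g : C(X,ℝ)) : f + g = (f ⊔ g) + (f ⊓ g) := by
  ext x
  simp only [ContinuousMap.add_apply, ContinuousMap.sup_apply, ContinuousMap.inf_apply]
  exact (max_add_min (f x) (g x)).symm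

omit [T2Space X] in
lemma pos_part_decomp (f : C(X,ℝ)) : f + ((-f) ⊔ 0) = f ⊔ 0 := by
  ext x
  simp only [ContinuousMap.add_apply, ContinuousMap.sup_apply, ContinuousMap.neg_apply,
    ContinuousMap.zero_apply]
  rcases le_total (f x) 0 with h | h
  · simp [max_eq_right h, max_eq_left (neg_nonneg.mpr h), max_eq_right]
  · simp [max_eq_left h, max_eq_right (neg_nonpos.mpr h)]

end helpers

/-- A nonzero real-valued lattice homomorphism on `C_c(X,ℝ)` is a positive multiple
of a point evaluation. -/
lemma delta_lemma {X : Type*} [TopologicalSpace X] [LocallyCompactSpace X] [T2Space X]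
    (ℓ : C(X,ℝ) → ℝ)
    (hadd : ∀ f g : C(X,ℝ), HasCompactSupport ⇑f → HasCompactSupport ⇑g →
      ℓ (f + g) = ℓ f + ℓ g)
    (hmono : ∀ f g : C(X,ℝ), HasCompactSupport ⇑f → HasCompactSupport ⇑g →
      f ≤ g → ℓ f ≤ ℓ g)
    (hsup : ∀ f g : C(X,ℝ), HasCompactSupport ⇑f → HasCompactSupport ⇑g →
      ℓ (f ⊔ g) = max (ℓ f) (ℓ g))
    (hne : ∃ f : C(X,ℝ), HasCompactSupport ⇑f ∧ ℓ f ≠ 0) :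
    ∃ x c, 0 < c ∧ ∀ f : C(X,ℝ), HasCompactSupport ⇑f → ℓ f = c * f x := by
  have hzero : ℓ 0 = 0 := by
    have := hadd 0 0 hcs_zero hcs_zero
    simp only [add_zero] at this
    linarith
  have hpos : ∀ f : C(X,ℝ), HasCompactSupport ⇑f → 0 ≤ f → 0 ≤ ℓ f := by
    intro f hf h0
    have := hmono 0 f hcs_zero hf h0
    rwa [hzero] at this
  have hinf : ∀ f g : C(X,ℝ), HasCompactSupport ⇑f → HasCompactSupport ⇑g →
      ℓ (f ⊓ g) = min (ℓ f) (ℓ g) := by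
    intro f g hf hg
    have h1 : ℓ (f + g) = ℓ f + ℓ g := hadd f g hf hg
    have h2 : ℓ ((f ⊔ g) + (f ⊓ g)) = ℓ (f ⊔ g) + ℓ (f ⊓ g) :=
      hadd _ _ (hcs_sup hf hg) (hcs_inf hf hg)
    rw [← sup_add_inf' f g, h1, hsup f g hf hg] at h2
    have := max_add_min (ℓ f) (ℓ g)
    linarith
  -- the positive cone where ℓ is nonzero
  set P : Set C(X,ℝ) := {f | HasCompactSupport ⇑f ∧ 0 ≤ f ∧ 0 < ℓ f} with hP
  -- P is nonempty
  have hPne : P.Nonempty := by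
    obtain ⟨f, hf, hlf⟩ := hne
    have hfp : HasCompactSupport ⇑(f ⊔ 0) := hcs_sup hf hcs_zero
    have hfm : HasCompactSupport ⇑((-f) ⊔ 0) := hcs_sup (hcs_neg hf) hcs_zero
    have hdecomp : ℓ (f ⊔ 0) = ℓ f + ℓ ((-f) ⊔ 0) := by
      rw [← pos_part_decomp f]; exact hadd _ _ hf hfm
    by_cases h : ℓ ((-f) ⊔ 0) > 0
    · exact ⟨(-f) ⊔ 0, hfm, le_sup_right, h⟩
    · have h0 : ℓ ((-f) ⊔ 0) = 0 :=
        le_antisymm (not_lt.mp h) (hpos _ hfm le_sup_right)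
      refine ⟨f ⊔ 0, hfp, le_sup_right, ?_⟩
      rcases lt_or_gt_of_ne hlf with h1 | h1
      · exfalso
        have : ℓ (f ⊔ 0) ≥ 0 := hpos _ hfp le_sup_right
        linarith [hdecomp]
      · rw [hdecomp, h0]; linarith
  -- P is directed downwards by inf, and supports shrink
  have hPinf : ∀ f ∈ P, ∀ g ∈ P, f ⊓ g ∈ P ∧
      tsupport ⇑(f ⊓ g) ⊆ tsupport ⇑f ∩ tsupport ⇑g := by
    intro f hf g hg
    obtain ⟨hfc, hf0, hfl⟩ := hf
    obtain ⟨hgc, hg0, hgl⟩ := hg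
    have hc : HasCompactSupport ⇑(f ⊓ g) := hcs_inf hfc hgc
    have hsub : ∀ x, (f ⊓ g) x ≠ 0 → f x ≠ 0 ∧ g x ≠ 0 := by
      intro x hx
      simp only [ContinuousMap.inf_apply] at hx
      constructor <;> intro h <;> apply hx
      · exact le_antisymm (by simp [h, hg0 x]) (le_min (by simp [h]) (hg0 x))
      · exact le_antisymm (by simp [h, hf0 x]) (le_min (hf0 x) (by simp [h]))
    refine ⟨⟨hc, le_inf hf0 hg0, ?_⟩, ?_⟩
    · rw [hinf f g hfc hgc]
      exact lt_min hfl hgl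
    · intro x hx
      have h1 : tsupport ⇑(f ⊓ g) ⊆ tsupport ⇑f :=
        closure_minimal (fun x hx => subset_tsupport _ (hsub x hx).1) (isClosed_tsupport _)
      have h2 : tsupport ⇑(f ⊓ g) ⊆ tsupport ⇑g :=
        closure_minimal (fun x hx => subset_tsupport _ (hsub x hx).2) (isClosed_tsupport _)
      exact ⟨h1 hx, h2 hx⟩
  -- find a common point of all supports
  have hA : (⋂ f : P, tsupport ⇑(f : C(X,ℝ))).Nonempty := by
    have : Nonempty P := ⟨⟨hPne.choose, hPne.choose_spec⟩⟩
    apply IsCompact.nonempty_iInter_of_directed_nonempty_isCompact_isClosed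
    · rintro ⟨f, hf⟩ ⟨g, hg⟩
      obtain ⟨hmem, hsub⟩ := hPinf f hf g hg
      exact ⟨⟨f ⊓ g, hmem⟩, fun x hx => (hsub hx).1, fun x hx => (hsub hx).2⟩
    · rintro ⟨f, hf, hf0, hfl⟩
      rw [nonempty_iff_ne_empty]
      intro hc
      rw [tsupport_eq_empty_iff] at hc
      rw [show f = 0 by ext x; exact congrFun hc x, hzero] at hfl
      exact lt_irrefl 0 hfl
    · exact fun f => f.2.1.isCompact
    · exact fun f => isClosed_tsupport _
  obtain ⟨x₀, hx₀⟩ := hA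
  have hx₀mem : ∀ f : C(X,ℝ), HasCompactSupport ⇑f → 0 ≤ f → ℓ f ≠ 0 → x₀ ∈ tsupport ⇑f := by
    intro f hf h0 hl
    have : f ∈ P := ⟨hf, h0, lt_of_le_of_ne (hpos f hf h0) (Ne.symm hl)⟩
    exact mem_iInter.mp hx₀ ⟨f, this⟩
  -- ℓ of a negation
  have hneg : ∀ f : C(X,ℝ), HasCompactSupport ⇑f → ℓ (-f) = -ℓ f := by
    intro f hf
    have := hadd f (-f) hf (hcs_neg hf)
    simp only [add_neg_cancel, hzero] at this
    linarith
  -- natural-number homogeneity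
  have lnat : ∀ (n : ℕ) (f : C(X,ℝ)), HasCompactSupport ⇑f →
      ℓ ((n : ℝ) • f) = n * ℓ f := by
    intro n
    induction n with
    | zero => intro f hf; simp only [Nat.cast_zero, zero_smul, hzero, zero_mul]
    | succ n ih =>
      intro f hf
      have heq : ((n+1 : ℕ) : ℝ) • f = (n : ℝ) • f + f := by
        ext x; simp only [ContinuousMap.smul_apply, ContinuousMap.add_apply, smul_eq_mul]
        push_cast; ring
      rw [heq, hadd _ _ (hcs_smul _ hf) hf, ih f hf]
      push_cast; ring
  -- integer homogeneity
  have lint : ∀ (z : ℤ) (f : C(X,ℝ)), HasCompactSupport ⇑f →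
      ℓ ((z : ℝ) • f) = z * ℓ f := by
    intro z f hf
    rcases le_or_gt 0 z with hz | hz
    · obtain ⟨n, rfl⟩ := Int.eq_ofNat_of_zero_le hz
      exact_mod_cast lnat n f hf
    · obtain ⟨n, rfl⟩ : ∃ n : ℕ, z = -(n : ℤ) := ⟨z.natAbs, by omega⟩
      have heq : ((-(n:ℤ) : ℤ) : ℝ) • f = -((n : ℝ) • f) := by
        ext x
        simp only [ContinuousMap.smul_apply, ContinuousMap.neg_apply, smul_eq_mul]
        push_cast; ring
      rw [heq, hneg _ (hcs_smul _ hf), lnat n f hf]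
      push_cast; ring
  -- rational homogeneity
  have lrat : ∀ (q : ℚ) (f : C(X,ℝ)), HasCompactSupport ⇑f →
      ℓ ((q : ℝ) • f) = q * ℓ f := by
    intro q f hf
    have hden : ((q.den : ℝ)) * (q : ℝ) = (q.num : ℝ) := by
      have : ((q.den : ℚ)) * q = (q.num : ℚ) := by
        rw [mul_comm, Rat.mul_den_eq_num]
      exact_mod_cast this
    have heq : ((q.den : ℕ) : ℝ) • ((q : ℝ) • f) = ((q.num : ℤ) : ℝ) • f := by
      rw [smul_smul, hden]
    have h1 := lnat q.den ((q : ℝ) • f) (hcs_smul _ hf)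
    rw [heq, lint q.num f hf] at h1
    have hden0 : (q.den : ℝ) ≠ 0 := by
      exact_mod_cast q.den_ne_zero
    have h2 : (q.den : ℝ) * ((q : ℝ) * ℓ f) = (q.den : ℝ) * ℓ ((q : ℝ) • f) := by
      rw [← mul_assoc, hden]; exact h1
    exact (mul_left_cancel₀ hden0 h2).symm
  -- ℓ vanishes on nonnegative compactly supported functions vanishing at x₀
  have hvanish : ∀ h : C(X,ℝ), HasCompactSupport ⇑h → 0 ≤ h → h x₀ = 0 → ℓ h = 0 := by
    intro h hh h0 hx
    obtain ⟨k, hk1, -, hkc, hk01⟩ := exists_continuous_one_zero_of_isCompact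
      hh.isCompact isClosed_empty (disjoint_empty _)
    have hk0 : (0 : C(X,ℝ)) ≤ k := fun x => (hk01 x).1
    have hlk0 : 0 ≤ ℓ k := hpos k hkc hk0
    refine le_antisymm ?_ (hpos h hh h0)
    have key : ∀ q : ℚ, 0 < q → ℓ h ≤ q * ℓ k := by
      intro q hq
      set g : C(X,ℝ) := (h - (q : ℝ) • k) ⊔ 0 with hgdef
      have hgx : ∀ x, g x = max (h x - (q : ℝ) * k x) 0 := by
        intro x
        simp [hgdef]
      have hgne : ∀ x, g x ≠ 0 → (q : ℝ) * k x < h x := by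
        intro x hgx'
        rw [hgx x] at hgx'
        rcases le_or_gt (h x - (q : ℝ) * k x) 0 with hc | hc
        · exact absurd (max_eq_right hc) hgx'
        · linarith
      have hgc : HasCompactSupport ⇑g := by
        apply hcs_of_subset hh
        intro x hx'
        have h1 := hgne x hx'
        have h2 : 0 ≤ (q : ℝ) * k x := by
          have h3 := (hk01 x).1
          have h4 : (0:ℝ) ≤ q := by exact_mod_cast hq.le
          positivity
        intro hzero'
        rw [hzero'] at h1
        linarith
      have hg0 : (0 : C(X,ℝ)) ≤ g := le_sup_right
      have hgvan : ℓ g = 0 := by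
        by_contra hne'
        have hmem := hx₀mem g hgc hg0 hne'
        have hsubC : tsupport ⇑g ⊆ {x | (q : ℝ) ≤ h x} := by
          apply closure_minimal
          · intro x hx'
            have h1 := hgne x hx'
            have h2 : h x ≠ 0 := by
              have h5 : 0 ≤ (q : ℝ) * k x := by
                have h3 := (hk01 x).1
                have h4 : (0:ℝ) ≤ q := by exact_mod_cast hq.le
                positivity
              intro hzero'
              rw [hzero'] at h1
              linarith
            have h3 : x ∈ tsupport ⇑h := subset_tsupport _ h2
            have h4 : k x = 1 := hk1 h3
            rw [h4, mul_one] at h1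
            exact le_of_lt h1
          · exact isClosed_le continuous_const h.continuous
        have := hsubC hmem
        simp only [mem_setOf_eq, hx] at this
        have h6 : (0:ℝ) < q := by exact_mod_cast hq
        linarith
      have hle : h ≤ g + (q : ℝ) • k := by
        rw [ContinuousMap.le_def]
        intro x
        simp only [ContinuousMap.add_apply, hgdef, ContinuousMap.sup_apply,
          ContinuousMap.sub_apply, ContinuousMap.smul_apply, smul_eq_mul,
          ContinuousMap.zero_apply]
        have h7 : h x - (q:ℝ) * k x ≤ (h x - (q:ℝ) * k x) ⊔ 0 := le_sup_left
        linarith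
      calc ℓ h ≤ ℓ (g + (q : ℝ) • k) :=
            hmono _ _ hh (hcs_add hgc (hcs_smul _ hkc)) hle
        _ = ℓ g + ℓ ((q : ℝ) • k) := hadd _ _ hgc (hcs_smul _ hkc)
        _ = (q : ℝ) * ℓ k := by rw [hgvan, lrat q k hkc, zero_add]
    by_contra hlt
    push_neg at hlt
    obtain ⟨q, hq1, hq2⟩ := exists_rat_btwn (show (0:ℝ) < ℓ h / (ℓ k + 1) by positivity)
    have h1 := key q (by exact_mod_cast hq1)
    have h2 : (q : ℝ) * ℓ k < ℓ h := by
      have : (q : ℝ) * ℓ k ≤ (ℓ h / (ℓ k + 1)) * ℓ k := by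
        apply mul_le_mul_of_nonneg_right (le_of_lt hq2) hlk0
      have hlt2 : (ℓ h / (ℓ k + 1)) * ℓ k < ℓ h := by
        rw [div_mul_eq_mul_div, div_lt_iff₀ (by linarith)]
        nlinarith
      linarith
    linarith
  -- evaluation formula for nonnegative functions against a companion bump function
  have hvalue : ∀ h : C(X,ℝ), HasCompactSupport ⇑h → 0 ≤ h →
      ∀ k : C(X,ℝ), HasCompactSupport ⇑k → (∀ x, k x ∈ Icc (0:ℝ) 1) →
      EqOn ⇑k 1 (tsupport ⇑h) → k x₀ = 1 → ℓ h = h x₀ * ℓ k := by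
    intro h hh h0 k hkc hk01 hk1 hkx
    have hk0 : (0 : C(X,ℝ)) ≤ k := by
      rw [ContinuousMap.le_def]; intro x; exact (hk01 x).1
    have hlk0 : 0 ≤ ℓ k := hpos k hkc hk0
    have hh0 : 0 ≤ h x₀ := h0 x₀
    -- upper bounds
    have hub : ∀ q : ℚ, h x₀ < (q:ℝ) → ℓ h ≤ (q:ℝ) * ℓ k := by
      intro q hq
      have hq0 : (0:ℝ) < q := lt_of_le_of_lt hh0 hq
      set g : C(X,ℝ) := (h - (q : ℝ) • k) ⊔ 0 with hgdef
      have hgx : ∀ x, g x = (h x - (q : ℝ) * k x) ⊔ 0 := by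
        intro x; simp [hgdef]
      have hgne : ∀ x, g x ≠ 0 → (q : ℝ) * k x < h x := by
        intro x hgx'
        rw [hgx x] at hgx'
        rcases le_or_gt (h x - (q : ℝ) * k x) 0 with hc | hc
        · exact absurd (sup_eq_right.mpr hc) hgx'
        · linarith
      have hgc : HasCompactSupport ⇑g := by
        apply hcs_of_subset hh
        intro x hx'
        have h1 := hgne x hx'
        have h2 : 0 ≤ (q : ℝ) * k x := by
          have h3 := (hk01 x).1
          positivity
        intro hzero'
        rw [hzero'] at h1
        linarith
      have hg0 : (0 : C(X,ℝ)) ≤ g := le_sup_right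
      have hgx₀ : g x₀ = 0 := by
        rw [hgx x₀, hkx, mul_one]
        exact sup_eq_right.mpr (by linarith)
      have hgvan : ℓ g = 0 := hvanish g hgc hg0 hgx₀
      have hle : h ≤ g + (q : ℝ) • k := by
        rw [ContinuousMap.le_def]
        intro x
        simp only [ContinuousMap.add_apply, hgdef, ContinuousMap.sup_apply,
          ContinuousMap.sub_apply, ContinuousMap.smul_apply, smul_eq_mul,
          ContinuousMap.zero_apply]
        have h7 : h x - (q:ℝ) * k x ≤ (h x - (q:ℝ) * k x) ⊔ 0 := le_sup_left
        linarith
      calc ℓ h ≤ ℓ (g + (q : ℝ) • k) :=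
            hmono _ _ hh (hcs_add hgc (hcs_smul _ hkc)) hle
        _ = ℓ g + ℓ ((q : ℝ) • k) := hadd _ _ hgc (hcs_smul _ hkc)
        _ = (q : ℝ) * ℓ k := by rw [hgvan, lrat q k hkc, zero_add]
    -- lower bounds
    have hlb : ∀ q : ℚ, (q:ℝ) < h x₀ → (q:ℝ) * ℓ k ≤ ℓ h := by
      intro q hq
      set g : C(X,ℝ) := ((q : ℝ) • k - h) ⊔ 0 with hgdef
      have hgx : ∀ x, g x = ((q : ℝ) * k x - h x) ⊔ 0 := by
        intro x; simp [hgdef]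
      have hgne : ∀ x, g x ≠ 0 → h x < (q : ℝ) * k x := by
        intro x hgx'
        rw [hgx x] at hgx'
        rcases le_or_gt ((q : ℝ) * k x - h x) 0 with hc | hc
        · exact absurd (sup_eq_right.mpr hc) hgx'
        · linarith
      have hgc : HasCompactSupport ⇑g := by
        apply hcs_of_subset2 hkc hh (f := k) (g := h)
        intro x hx'
        have h1 := hgne x hx'
        by_contra hc
        push_neg at hc
        rw [hc.1, hc.2, mul_zero] at h1
        exact lt_irrefl 0 h1
      have hg0 : (0 : C(X,ℝ)) ≤ g := le_sup_right
      have hgx₀ : g x₀ = 0 := by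
        rw [hgx x₀, hkx, mul_one]
        exact sup_eq_right.mpr (by linarith)
      have hgvan : ℓ g = 0 := hvanish g hgc hg0 hgx₀
      have hle : (q : ℝ) • k ≤ g + h := by
        rw [ContinuousMap.le_def]
        intro x
        simp only [ContinuousMap.add_apply, hgdef, ContinuousMap.sup_apply,
          ContinuousMap.sub_apply, ContinuousMap.smul_apply, smul_eq_mul,
          ContinuousMap.zero_apply]
        have h7 : (q:ℝ) * k x - h x ≤ ((q:ℝ) * k x - h x) ⊔ 0 := le_sup_left
        linarith
      have := hmono _ _ (hcs_smul _ hkc) (hcs_add hgc hh) hle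
      rw [hadd _ _ hgc hh, hgvan, zero_add, lrat q k hkc] at this
      exact this
    -- conclude
    refine le_antisymm ?_ ?_
    · by_contra hlt
      push_neg at hlt
      rcases eq_or_lt_of_le hlk0 with hk0' | hk0'
      · obtain ⟨q, hq1⟩ := exists_rat_gt (h x₀)
        have := hub q hq1
        rw [← hk0'] at this
        have hlh0 : 0 ≤ ℓ h := hpos h hh h0
        rw [← hk0', mul_comm] at hlt
        simp at hlt this
        linarith
      · have hd : h x₀ < ℓ h / ℓ k := by
          rw [lt_div_iff₀ hk0']
          exact hlt
        obtain ⟨q, hq1, hq2⟩ := exists_rat_btwn hd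
        have h1 := hub q hq1
        rw [lt_div_iff₀ hk0'] at hq2
        linarith
    · by_contra hlt
      push_neg at hlt
      have hk0' : 0 < ℓ k := by
        rcases eq_or_lt_of_le hlk0 with h' | h'
        · rw [← h', mul_zero] at hlt
          exact absurd hlt (not_lt.mpr (hpos h hh h0))
        · exact h'
      have hd : ℓ h / ℓ k < h x₀ := by
        rw [div_lt_iff₀ hk0']
        linarith [hlt]
      obtain ⟨q, hq1, hq2⟩ := exists_rat_btwn hd
      have h1 := hlb q hq2
      have h2 : ℓ h < (q:ℝ) * ℓ k := by
        rw [div_lt_iff₀ hk0'] at hq1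
        linarith
      linarith
  -- the reference bump at x₀ and the constant c
  obtain ⟨k₀, hk₀1, -, hk₀c, hk₀01⟩ := exists_continuous_one_zero_of_isCompact
    (isCompact_singleton (x := x₀)) isClosed_empty (disjoint_empty _)
  have hk₀x : k₀ x₀ = 1 := hk₀1 (mem_singleton x₀)
  set c : ℝ := ℓ k₀ with hc
  have hc0 : 0 ≤ c := hpos k₀ hk₀c (by rw [ContinuousMap.le_def]; intro x; exact (hk₀01 x).1)
  -- formula for nonnegative functions
  have hformula0 : ∀ h : C(X,ℝ), HasCompactSupport ⇑h → 0 ≤ h → ℓ h = c * h x₀ := by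
    intro h hh h0
    have hKcomp : IsCompact (tsupport ⇑h ∪ (tsupport ⇑k₀ ∪ {x₀})) :=
      (hh.isCompact.union (hk₀c.isCompact.union isCompact_singleton))
    obtain ⟨k₂, hk₂1, -, hk₂c, hk₂01⟩ := exists_continuous_one_zero_of_isCompact
      hKcomp isClosed_empty (disjoint_empty _)
    have hk₂x : k₂ x₀ = 1 := hk₂1 (by simp)
    have e1 : ℓ h = h x₀ * ℓ k₂ :=
      hvalue h hh h0 k₂ hk₂c hk₂01 (fun x hx => hk₂1 (by simp [hx])) hk₂x
    have e2 : ℓ k₀ = k₀ x₀ * ℓ k₂ :=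
      hvalue k₀ hk₀c (by rw [ContinuousMap.le_def]; intro x; exact (hk₀01 x).1)
        k₂ hk₂c hk₂01 (fun x hx => hk₂1 (by simp [hx])) hk₂x
    rw [hk₀x, one_mul] at e2
    rw [e1, ← e2, hc, mul_comm]
  -- formula for all functions
  have hformula : ∀ f : C(X,ℝ), HasCompactSupport ⇑f → ℓ f = c * f x₀ := by
    intro f hf
    have hfp : HasCompactSupport ⇑(f ⊔ 0) := hcs_sup hf hcs_zero
    have hfm : HasCompactSupport ⇑((-f) ⊔ 0) := hcs_sup (hcs_neg hf) hcs_zero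
    have hdecomp : ℓ (f ⊔ 0) = ℓ f + ℓ ((-f) ⊔ 0) := by
      rw [← pos_part_decomp f]; exact hadd _ _ hf hfm
    have e1 : ℓ (f ⊔ 0) = c * ((f ⊔ 0) x₀) := hformula0 _ hfp le_sup_right
    have e2 : ℓ ((-f) ⊔ 0) = c * (((-f) ⊔ 0) x₀) := hformula0 _ hfm le_sup_right
    have e3 : (f ⊔ 0) x₀ = (f x₀) ⊔ 0 := by simp
    have e4 : ((-f) ⊔ 0) x₀ = (-(f x₀)) ⊔ 0 := by simp
    rw [e3] at e1
    rw [e4] at e2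
    rcases le_total (f x₀) 0 with hfx | hfx
    · have he1 : (f x₀) ⊔ 0 = 0 := sup_eq_right.mpr hfx
      have he2 : (-(f x₀)) ⊔ 0 = -(f x₀) := sup_eq_left.mpr (by linarith)
      rw [he1, mul_zero] at e1
      rw [he2] at e2
      have hr : c * -(f x₀) = -(c * f x₀) := by ring
      rw [hr] at e2
      linarith [hdecomp, e1, e2]
    · have he1 : (f x₀) ⊔ 0 = f x₀ := sup_eq_left.mpr hfx
      have he2 : (-(f x₀)) ⊔ 0 = 0 := sup_eq_right.mpr (by linarith)
      rw [he1] at e1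
      rw [he2, mul_zero] at e2
      linarith [hdecomp, e1, e2]
  -- c is positive
  have hcpos : 0 < c := by
    rcases eq_or_lt_of_le hc0 with h' | h'
    · exfalso
      obtain ⟨f, hf, hlf⟩ := hne
      rw [hformula f hf, ← h', zero_mul] at hlf
      exact hlf rfl
    · exact h'
  exact ⟨x₀, c, hcpos, hformula⟩

/-- Representation of an additive order isomorphism of compactly supported function spaces
as a weighted composition, pointwise. -/
lemma rep_lemma {X Y : Type*}
    [TopologicalSpace X] [LocallyCompactSpace X] [T2Space X]
    [TopologicalSpace Y] [LocallyCompactSpace Y] [T2Space Y]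
    (T : C(X, ℝ) → C(Y, ℝ))
    (hTbij : Set.BijOn T {f | HasCompactSupport ⇑f} {g | HasCompactSupport ⇑g})
    (hTadd : ∀ f g : C(X, ℝ), HasCompactSupport ⇑f → HasCompactSupport ⇑g →
      T (f + g) = T f + T g)
    (hTord : ∀ f g : C(X, ℝ), HasCompactSupport ⇑f → HasCompactSupport ⇑g →
      (f ≤ g ↔ T f ≤ T g)) :
    ∃ (φ : Y → X) (p : Y → ℝ), (∀ y, 0 < p y) ∧
      ∀ f : C(X, ℝ), HasCompactSupport ⇑f → ∀ y, T f y = p y * f (φ y) := by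
  -- T preserves sup
  have hTsup : ∀ f g : C(X, ℝ), HasCompactSupport ⇑f → HasCompactSupport ⇑g →
      T (f ⊔ g) = T f ⊔ T g := by
    intro f g hf hg
    have hfg : HasCompactSupport ⇑(f ⊔ g) := hcs_sup hf hg
    have hTfg : HasCompactSupport ⇑(T f ⊔ T g) :=
      hcs_sup (hTbij.mapsTo hf) (hTbij.mapsTo hg)
    obtain ⟨h, hh, hTh⟩ := hTbij.surjOn hTfg
    have h1 : f ≤ h := (hTord f h hf hh).mpr (by rw [hTh]; exact le_sup_left)
    have h2 : g ≤ h := (hTord g h hg hh).mpr (by rw [hTh]; exact le_sup_right)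
    have h3 : T (f ⊔ g) ≤ T h := (hTord _ _ hfg hh).mp (sup_le h1 h2)
    have h4 : T f ⊔ T g ≤ T (f ⊔ g) :=
      sup_le ((hTord f _ hf hfg).mp le_sup_left) ((hTord g _ hg hfg).mp le_sup_right)
    rw [hTh] at h3
    exact le_antisymm h3 h4
  have key : ∀ y : Y, ∃ xc : X × ℝ, 0 < xc.2 ∧
      ∀ f : C(X, ℝ), HasCompactSupport ⇑f → T f y = xc.2 * f xc.1 := by
    intro y
    have hℓadd : ∀ f g : C(X,ℝ), HasCompactSupport ⇑f → HasCompactSupport ⇑g →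
        T (f + g) y = T f y + T g y := by
      intro f g hf hg; rw [hTadd f g hf hg]; rfl
    have hℓmono : ∀ f g : C(X,ℝ), HasCompactSupport ⇑f → HasCompactSupport ⇑g →
        f ≤ g → T f y ≤ T g y := by
      intro f g hf hg hle
      exact (hTord f g hf hg).mp hle y
    have hℓsup : ∀ f g : C(X,ℝ), HasCompactSupport ⇑f → HasCompactSupport ⇑g →
        T (f ⊔ g) y = max (T f y) (T g y) := by
      intro f g hf hg; rw [hTsup f g hf hg]; rfl
    have hℓne : ∃ f : C(X,ℝ), HasCompactSupport ⇑f ∧ T f y ≠ 0 := by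
      obtain ⟨b, hb1, -, hbc, -⟩ := exists_continuous_one_zero_of_isCompact
        (isCompact_singleton (x := y)) isClosed_empty (disjoint_empty _)
      obtain ⟨f, hf, hTf⟩ := hTbij.surjOn (show b ∈ {g : C(Y,ℝ) | HasCompactSupport ⇑g} from hbc)
      refine ⟨f, hf, ?_⟩
      rw [hTf]
      rw [hb1 (mem_singleton y)]
      norm_num
    obtain ⟨x, c, hc, hform⟩ := delta_lemma (fun f => T f y) hℓadd hℓmono hℓsup hℓne
    exact ⟨(x, c), hc, fun f hf => by rw [hform f hf]⟩
  choose w hw1 hw2 using key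
  exact ⟨fun y => (w y).1, fun y => (w y).2, hw1, fun f hf y => hw2 y f hf⟩

lemma bump_lemma {X : Type*} [TopologicalSpace X] [LocallyCompactSpace X] [T2Space X]
    (x : X) (t : Set X) (ht : IsClosed t) (hx : x ∉ t) :
    ∃ f : C(X,ℝ), HasCompactSupport ⇑f ∧ f x = 1 ∧ ∀ z ∈ t, f z = 0 := by
  obtain ⟨f, hf1, hf0, hfc, -⟩ := exists_continuous_one_zero_of_isCompact
    (isCompact_singleton (x := x)) ht (disjoint_singleton_left.mpr hx)
  exact ⟨f, hfc, hf1 (mem_singleton x), fun z hz => hf0 hz⟩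


/-- An additive lattice isomorphism `T : C_c(X,ℝ) → C_c(Y,ℝ)` has the form
`Tf(y) = p(y)·f(φ(y))` for a unique homeomorphism `φ : Y → X` and a unique continuous
positive function `p : Y → (0,∞)`. -/
theorem stmt_14 {X Y : Type*}
    [TopologicalSpace X] [LocallyCompactSpace X] [T2Space X]
    [TopologicalSpace Y] [LocallyCompactSpace Y] [T2Space Y]
    (T : C(X, ℝ) → C(Y, ℝ))
    (hTbij : Set.BijOn T {f | HasCompactSupport ⇑f} {g | HasCompactSupport ⇑g})
    (hTadd : ∀ f g : C(X, ℝ), HasCompactSupport ⇑f → HasCompactSupport ⇑g →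
      T (f + g) = T f + T g)
    (hTord : ∀ f g : C(X, ℝ), HasCompactSupport ⇑f → HasCompactSupport ⇑g →
      (f ≤ g ↔ T f ≤ T g)) :
    ∃! φp : (Y ≃ₜ X) × (Y → ℝ),
      Continuous φp.2 ∧ (∀ y, 0 < φp.2 y) ∧
      ∀ f : C(X, ℝ), HasCompactSupport ⇑f → ∀ y, T f y = φp.2 y * f (φp.1 y) := by
  classical
  -- the inverse map S
  have hSex : ∀ g : C(Y,ℝ), HasCompactSupport ⇑g →
      ∃ f : C(X,ℝ), HasCompactSupport ⇑f ∧ T f = g := by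
    intro g hg
    obtain ⟨f, hf, hTf⟩ := hTbij.surjOn hg
    exact ⟨f, hf, hTf⟩
  obtain ⟨S, hSdef⟩ : ∃ S : C(Y,ℝ) → C(X,ℝ), ∀ g : C(Y,ℝ),
      S g = if h : HasCompactSupport ⇑g then (hSex g h).choose else 0 :=
    ⟨fun g => if h : HasCompactSupport ⇑g then (hSex g h).choose else 0, fun g => rfl⟩
  have hS1 : ∀ g : C(Y,ℝ), ∀ _hg : HasCompactSupport ⇑g,
      HasCompactSupport ⇑(S g) ∧ T (S g) = g := by
    intro g hg
    rw [hSdef g, dif_pos hg]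
    exact (hSex g hg).choose_spec
  have hS2 : ∀ f : C(X,ℝ), HasCompactSupport ⇑f → S (T f) = f := by
    intro f hf
    have hTf : HasCompactSupport ⇑(T f) := hTbij.mapsTo hf
    exact hTbij.injOn (hS1 (T f) hTf).1 hf (hS1 (T f) hTf).2
  have hSbij : Set.BijOn S {g | HasCompactSupport ⇑g} {f | HasCompactSupport ⇑f} := by
    refine ⟨fun g hg => (hS1 g hg).1, ?_, ?_⟩
    · intro g hg g' hg' he
      rw [← (hS1 g hg).2, ← (hS1 g' hg').2, he]
    · intro f hf
      exact ⟨T f, hTbij.mapsTo hf, hS2 f hf⟩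
  have hSadd : ∀ g h : C(Y,ℝ), HasCompactSupport ⇑g → HasCompactSupport ⇑h →
      S (g + h) = S g + S h := by
    intro g h hg hh
    have h1 : HasCompactSupport ⇑(S (g+h)) := (hS1 _ (hcs_add hg hh)).1
    have h2 : HasCompactSupport ⇑(S g + S h) := hcs_add (hS1 g hg).1 (hS1 h hh).1
    apply hTbij.injOn h1 h2
    rw [(hS1 _ (hcs_add hg hh)).2, hTadd _ _ (hS1 g hg).1 (hS1 h hh).1,
      (hS1 g hg).2, (hS1 h hh).2]
  have hSord : ∀ g h : C(Y,ℝ), HasCompactSupport ⇑g → HasCompactSupport ⇑h →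
      (g ≤ h ↔ S g ≤ S h) := by
    intro g h hg hh
    constructor
    · intro hle
      apply (hTord (S g) (S h) (hS1 g hg).1 (hS1 h hh).1).mpr
      rwa [(hS1 g hg).2, (hS1 h hh).2]
    · intro hle
      have := (hTord (S g) (S h) (hS1 g hg).1 (hS1 h hh).1).mp hle
      rwa [(hS1 g hg).2, (hS1 h hh).2] at this
  -- representations of T and S
  obtain ⟨φ, p, hp, hrepT⟩ := rep_lemma T hTbij hTadd hTord
  obtain ⟨ψ, q, hq, hrepS⟩ := rep_lemma S hSbij hSadd hSord
  -- composite identities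
  have hcomp : ∀ f : C(X,ℝ), HasCompactSupport ⇑f →
      ∀ x, f x = q x * (p (ψ x) * f (φ (ψ x))) := by
    intro f hf x
    have h1 : S (T f) = f := hS2 f hf
    have h2 : HasCompactSupport ⇑(T f) := hTbij.mapsTo hf
    calc f x = S (T f) x := by rw [h1]
      _ = q x * (T f) (ψ x) := hrepS (T f) h2 x
      _ = q x * (p (ψ x) * f (φ (ψ x))) := by rw [hrepT f hf (ψ x)]
  have hcomp' : ∀ g : C(Y,ℝ), HasCompactSupport ⇑g →
      ∀ y, g y = p y * (q (φ y) * g (ψ (φ y))) := by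
    intro g hg y
    have h1 : T (S g) = g := (hS1 g hg).2
    have h2 : HasCompactSupport ⇑(S g) := (hS1 g hg).1
    calc g y = T (S g) y := by rw [h1]
      _ = p y * (S g) (φ y) := hrepT (S g) h2 y
      _ = p y * (q (φ y) * g (ψ (φ y))) := by rw [hrepS g hg (φ y)]
  have hright : ∀ x, φ (ψ x) = x := by
    intro x
    by_contra hne
    obtain ⟨f, hfc, hf1, hf0⟩ := bump_lemma x {φ (ψ x)} isClosed_singleton
      (by simp only [mem_singleton_iff]; exact fun h => hne h.symm)
    have h := hcomp f hfc x
    rw [hf1, hf0 _ (mem_singleton _)] at h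
    simp at h
  have hleft : ∀ y, ψ (φ y) = y := by
    intro y
    by_contra hne
    obtain ⟨g, hgc, hg1, hg0⟩ := bump_lemma y {ψ (φ y)} isClosed_singleton
      (by simp only [mem_singleton_iff]; exact fun h => hne h.symm)
    have h := hcomp' g hgc y
    rw [hg1, hg0 _ (mem_singleton _)] at h
    simp at h
  -- continuity of φ and ψ
  have hφcont : Continuous φ := by
    rw [continuous_iff_continuousAt]
    intro y₀
    rw [ContinuousAt, tendsto_nhds]
    intro U hU hyU
    obtain ⟨f, hfc, hf1, hf0⟩ := bump_lemma (φ y₀) Uᶜ hU.isClosed_compl (by simpa)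
    have hpos : T f y₀ ≠ 0 := by
      rw [hrepT f hfc y₀, hf1, mul_one]
      exact ne_of_gt (hp y₀)
    have hev : ∀ᶠ y in 𝓝 y₀, T f y ≠ 0 :=
      (T f).continuous.continuousAt.eventually_ne hpos
    filter_upwards [hev] with y hy
    by_contra hyU'
    apply hy
    rw [hrepT f hfc y, hf0 _ hyU', mul_zero]
  have hψcont : Continuous ψ := by
    rw [continuous_iff_continuousAt]
    intro x₀
    rw [ContinuousAt, tendsto_nhds]
    intro U hU hxU
    obtain ⟨g, hgc, hg1, hg0⟩ := bump_lemma (ψ x₀) Uᶜ hU.isClosed_compl (by simpa)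
    have hpos : S g x₀ ≠ 0 := by
      rw [hrepS g hgc x₀, hg1, mul_one]
      exact ne_of_gt (hq x₀)
    have hev : ∀ᶠ x in 𝓝 x₀, S g x ≠ 0 :=
      (S g).continuous.continuousAt.eventually_ne hpos
    filter_upwards [hev] with x hx
    by_contra hxU'
    apply hx
    rw [hrepS g hgc x, hg0 _ hxU', mul_zero]
  -- continuity of p
  have hpcont : Continuous p := by
    rw [continuous_iff_continuousAt]
    intro y₀
    obtain ⟨K, hKc, hKn⟩ := exists_compact_mem_nhds (φ y₀)
    obtain ⟨k, hk1, -, hkc, -⟩ := exists_continuous_one_zero_of_isCompact hKc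
      isClosed_empty (disjoint_empty _)
    have hev : ∀ᶠ y in 𝓝 y₀, T k y = p y := by
      have hmem : y₀ ∈ φ ⁻¹' (interior K) := mem_interior_iff_mem_nhds.mpr hKn
      have hn : φ ⁻¹' (interior K) ∈ 𝓝 y₀ :=
        (isOpen_interior.preimage hφcont).mem_nhds hmem
      filter_upwards [hn] with y hy
      rw [hrepT k hkc y, show k (φ y) = 1 from hk1 (interior_subset hy), mul_one]
    exact ((T k).continuous.continuousAt).congr hev
  -- the homeomorphism
  let Φ : Y ≃ₜ X :=
    { toFun := φ, invFun := ψ, left_inv := hleft, right_inv := hright,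
      continuous_toFun := hφcont, continuous_invFun := hψcont }
  refine ⟨(Φ, p), ⟨hpcont, hp, fun f hf y => hrepT f hf y⟩, ?_⟩
  rintro ⟨Φ', p'⟩ ⟨hp'cont, hp'pos, hform'⟩
  have hφeq : ∀ y, Φ' y = φ y := by
    intro y
    by_contra hne
    obtain ⟨f, hfc, hf1, hf0⟩ := bump_lemma (Φ' y) {φ y} isClosed_singleton
      (by simp only [mem_singleton_iff]; exact hne)
    have h1 := hform' f hfc y
    have h2 := hrepT f hfc y
    rw [hf1, mul_one] at h1
    rw [hf0 _ (mem_singleton _), mul_zero] at h2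
    rw [h2] at h1
    exact absurd h1.symm (ne_of_gt (hp'pos y))
  have hpeq : ∀ y, p' y = p y := by
    intro y
    obtain ⟨f, hfc, hf1, -⟩ := bump_lemma (φ y) (∅ : Set X) isClosed_empty (notMem_empty _)
    have h1 := hform' f hfc y
    have h2 := hrepT f hfc y
    rw [hφeq y, hf1, mul_one] at h1
    rw [hf1, mul_one] at h2
    rw [h1] at h2
    exact h2
  have hΦeq : Φ' = Φ := by
    apply Homeomorph.ext
    intro y
    exact hφeq y
  exact Prod.ext hΦeq (funext hpeq)
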